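/- arXiv:2406.08148 — 7 statements merged into one kernel-verified Lean document; each statement's English description precedes it below -/
import Mathlib

section
/- Let C < 0, γ ∈ (0,1), φα, φβ > 0, φα', φβ' ≥ 0 with Dα := φα - γ·φα' ≠ 0 and Dβ := φβ - γ·φβ' ≠ 0. Then the two Bellman solutions θ_{π₁} = (C/Dα, C/φβ + Cγφβ'/(φβ·Dα)) and θ_{π₂} = (C/φα + Cγφα'/(φα·Dβ), C/Dβ) both exist and are distinct (with θ_{π₁}(a₁) > θ_{π₁}(a₂) and θ_{π₂}(a₁) < θ_{π₂}(a₂)) if either (Dα > 0 and Dβ < 0) or (Dα < 0 and Dβ > 0). -/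
theorem bellman_two_solutions_distinct
    (C γ φα φβ φα' φβ' : ℝ)
    (hC : C < 0) (hγ0 : 0 < γ) (hγ1 : γ < 1)
    (hφα : 0 < φα) (hφβ : 0 < φβ) (hφα' : 0 ≤ φα') (hφβ' : 0 ≤ φβ')
    (hDα : φα - γ * φα' ≠ 0) (hDβ : φβ - γ * φβ' ≠ 0)
    (hsign : (0 < φα - γ * φα' ∧ φβ - γ * φβ' < 0) ∨
             (φα - γ * φα' < 0 ∧ 0 < φβ - γ * φβ')) :
    let θπ₁ : ℝ × ℝ := (C / (φα - γ * φα'),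
      C / φβ + C * γ * φβ' / (φβ * (φα - γ * φα')))
    let θπ₂ : ℝ × ℝ := (C / φα + C * γ * φα' / (φα * (φβ - γ * φβ')),
      C / (φβ - γ * φβ'))
    θπ₁.1 > θπ₁.2 ∧ θπ₂.1 < θπ₂.2 ∧ θπ₁ ≠ θπ₂ := by
  intro θπ₁ θπ₂
  have e1 : θπ₁.1 - θπ₁.2 =
      (C * (φβ - γ * φβ') - C * (φα - γ * φα')) / (φβ * (φα - γ * φα')) := by
    show C / (φα - γ * φα') - (C / φβ + C * γ * φβ' / (φβ * (φα - γ * φα'))) = _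
    field_simp
    ring
  have e2 : θπ₂.2 - θπ₂.1 =
      (C * (φα - γ * φα') - C * (φβ - γ * φβ')) / (φα * (φβ - γ * φβ')) := by
    show C / (φβ - γ * φβ') - (C / φα + C * γ * φα' / (φα * (φβ - γ * φβ'))) = _
    field_simp
    ring
  have h1 : θπ₁.1 > θπ₁.2 := by
    rw [gt_iff_lt, ← sub_pos, e1]
    rcases hsign with ⟨ha, hb⟩ | ⟨ha, hb⟩
    · exact div_pos (by nlinarith) (by positivity)
    · exact div_pos_of_neg_of_neg (by nlinarith) (by nlinarith)
  have h2 : θπ₂.1 < θπ₂.2 := by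
    rw [← sub_pos, e2]
    rcases hsign with ⟨ha, hb⟩ | ⟨ha, hb⟩
    · exact div_pos_of_neg_of_neg (by nlinarith) (by nlinarith)
    · exact div_pos (by nlinarith) (by positivity)
  refine ⟨h1, h2, fun he => ?_⟩
  rw [he] at h1
  exact absurd h1 (not_lt.2 h2.le)
end

section
/- Define the residual-gradient force F_res(θ) piecewise: for θ₁ ≥ θ₂, F_res(θ) = (−(φα−γφα')(φα θ₁ − C − γφα' θ₁) + γφβ'(φβ θ₂ − C − γφβ' θ₁), −φβ·(φβ θ₂ − C − γφβ' θ₁))* and for θ₁ ≤ θ₂ the corresponding π₂ expression F^{π₂}_res(θ) = (−φα(φα θ₁ − C − γφα' θ₂), γφα'(φα θ₁ − C − γφα' θ₂) − (φβ−γφβ')(φβ θ₂ − C − γφβ' θ₂)). Then there exists a point θ on the boundary θ₁ = θ₂ where the two branch expressions differ, i.e., F^{π₁}_res(θ) ≠ F^{π₂}_res(θ); hence F_res is discontinuous across the policy boundary for generic parameters (in particular whenever φα' > 0 or φβ' > 0 with C < 0). -/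
theorem residual_gradient_discontinuous
    (C γ φα φβ φα' φβ' : ℝ)
    (hC : C < 0) (hγ0 : 0 < γ) (hγ1 : γ < 1)
    (hφα : 0 < φα) (hφβ : 0 < φβ) (hφα' : 0 ≤ φα') (hφβ' : 0 ≤ φβ')
    (hne : 0 < φα' ∨ 0 < φβ') :
    let Fπ₁ : ℝ × ℝ → ℝ × ℝ := fun θ =>
      (-((φα - γ * φα') * (φα * θ.1 - C - γ * φα' * θ.1))
        + γ * φβ' * (φβ * θ.2 - C - γ * φβ' * θ.1),
       -(φβ * (φβ * θ.2 - C - γ * φβ' * θ.1)))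
    let Fπ₂ : ℝ × ℝ → ℝ × ℝ := fun θ =>
      (-(φα * (φα * θ.1 - C - γ * φα' * θ.2)),
       γ * φα' * (φα * θ.1 - C - γ * φα' * θ.2)
        - (φβ - γ * φβ') * (φβ * θ.2 - C - γ * φβ' * θ.2))
    ∃ θ : ℝ × ℝ, θ.1 = θ.2 ∧ Fπ₁ θ ≠ Fπ₂ θ := by
  intro Fπ₁ Fπ₂
  refine ⟨(0, 0), rfl, ?_⟩
  simp only [Fπ₁, Fπ₂, Prod.mk.injEq, not_and]
  intro h1
  exfalso
  have h1' := congrArg Prod.fst h1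
  simp only [Prod.fst] at h1'
  have hsum : 0 < φα' + φβ' := by rcases hne with h | h <;> nlinarith
  nlinarith [mul_pos hγ0 hsum]
end

section
/- Assume φα = φβ =: φ > 0, C < 0, γ ∈ (0,1), φα', φβ' ≥ 0, Dα = φ − γφα' > 0, Dβ = φ − γφβ' < 0. Let θ_{π₁}, θ_{π₂} be the two Bellman solutions and let θ lie strictly between them on the open segment Ω = {λθ_{π₁} + (1−λ)θ_{π₂} : λ ∈ (0,1)} with θ on the π₂ side (θ(a₂) ≥ θ(a₁)). Then the semi-gradient force F^{π₂}_semi(θ) is a positive scalar multiple of the direction θ_{π₁} − θ_{π₂}. -/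
theorem semi_gradient_points_toward_pi1_on_pi2_side
    (C γ φ φα' φβ' : ℝ)
    (hC : C < 0) (hγ0 : 0 < γ) (hγ1 : γ < 1)
    (hφ : 0 < φ) (hφα' : 0 ≤ φα') (hφβ' : 0 ≤ φβ')
    (hDα : 0 < φ - γ * φα') (hDβ : φ - γ * φβ' < 0)
    (θ : ℝ × ℝ) (lam : ℝ) (hlam0 : 0 < lam) (hlam1 : lam < 1)
    (hθ : θ = lam • ((C / (φ - γ * φα'),
        C / φ + C * γ * φβ' / (φ * (φ - γ * φα'))) : ℝ × ℝ)
      + (1 - lam) • ((C / φ + C * γ * φα' / (φ * (φ - γ * φβ')),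
        C / (φ - γ * φβ')) : ℝ × ℝ))
    (hside : θ.2 ≥ θ.1) :
    ∃ c : ℝ, 0 < c ∧
      ((-(φ * (φ * θ.1 - C - γ * φα' * θ.2)),
        -(φ * (φ * θ.2 - C - γ * φβ' * θ.2))) : ℝ × ℝ)
      = c • (((C / (φ - γ * φα'),
          C / φ + C * γ * φβ' / (φ * (φ - γ * φα'))) : ℝ × ℝ)
        - ((C / φ + C * γ * φα' / (φ * (φ - γ * φβ')),
          C / (φ - γ * φβ')) : ℝ × ℝ)) := by
  have hφ0 : φ ≠ 0 := ne_of_gt hφ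
  have hDα0 : (φ - γ * φα') ≠ 0 := ne_of_gt hDα
  have hDβ0 : (φ - γ * φβ') ≠ 0 := ne_of_lt hDβ
  refine ⟨lam * (φ * (γ * φβ' - φ)), ?_, ?_⟩
  · have h1 : 0 < γ * φβ' - φ := by linarith
    positivity
  · subst hθ
    simp only [Prod.smul_mk, Prod.mk_add_mk, smul_eq_mul, Prod.mk_sub_mk, Prod.mk.injEq]
    constructor <;> (field_simp; ring)
end

section
/- Assume φα = φβ =: φ > 0, C < 0, γ ∈ (0,1), φα', φβ' ≥ 0, Dα = φ − γφα' > 0, Dβ = φ − γφβ' < 0. Let θ lie on the open segment between θ_{π₁} and θ_{π₂} with θ on the π₁ side (θ(a₁) ≥ θ(a₂)). Then F^{π₁}_semi(θ) is a positive scalar multiple of θ_{π₁} − θ_{π₂}, where F^{π₁}_semi(θ) = (−φ(φθ₁ − C − γφα'θ₁), −φ(φθ₂ − C − γφβ'θ₁)). -/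
theorem semi_gradient_points_toward_pi1_on_pi1_side
    (C γ φ φα' φβ' : ℝ)
    (hC : C < 0) (hγ0 : 0 < γ) (hγ1 : γ < 1)
    (hφ : 0 < φ) (hφα' : 0 ≤ φα') (hφβ' : 0 ≤ φβ')
    (hDα : 0 < φ - γ * φα') (hDβ : φ - γ * φβ' < 0)
    (θ : ℝ × ℝ) (lam : ℝ) (hlam0 : 0 < lam) (hlam1 : lam < 1)
    (hθ : θ = lam • ((C / (φ - γ * φα'),
        C / φ + C * γ * φβ' / (φ * (φ - γ * φα'))) : ℝ × ℝ)
      + (1 - lam) • ((C / φ + C * γ * φα' / (φ * (φ - γ * φβ')),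
        C / (φ - γ * φβ')) : ℝ × ℝ))
    (hside : θ.1 ≥ θ.2) :
    ∃ c : ℝ, 0 < c ∧
      ((-(φ * (φ * θ.1 - C - γ * φα' * θ.1)),
        -(φ * (φ * θ.2 - C - γ * φβ' * θ.1))) : ℝ × ℝ)
      = c • (((C / (φ - γ * φα'),
          C / φ + C * γ * φβ' / (φ * (φ - γ * φα'))) : ℝ × ℝ)
        - ((C / φ + C * γ * φα' / (φ * (φ - γ * φβ')),
          C / (φ - γ * φβ')) : ℝ × ℝ)) := by
  have hDα0 : (φ - γ * φα') ≠ 0 := ne_of_gt hDα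
  have hDβ0 : (φ - γ * φβ') ≠ 0 := ne_of_lt hDβ
  have hφ0 : φ ≠ 0 := ne_of_gt hφ
  refine ⟨(1 - lam) * φ * (φ - γ * φα'), mul_pos (mul_pos (by linarith) hφ) hDα, ?_⟩
  subst hθ
  simp only [Prod.smul_mk, Prod.mk_add_mk, smul_eq_mul, Prod.mk_sub_mk, Prod.mk.injEq]
  constructor <;> · field_simp; ring
end

section
/- Assume φα = φβ =: φ > 0, C < 0, γ ∈ (0,1), φα', φβ' ≥ 0, with Dα = φ − γφα' < 0 and Dβ = φ − γφβ' > 0. Let θ lie on the open segment between θ_{π₁} and θ_{π₂} (on either side of the boundary, using the matching branch F^{π₁}_semi when θ(a₁) ≥ θ(a₂) and F^{π₂}_semi when θ(a₂) ≥ θ(a₁)). Then the semi-gradient force at θ is a positive scalar multiple of θ_{π₂} − θ_{π₁}. -/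
theorem semi_gradient_points_toward_pi2
    (C γ φ φα' φβ' : ℝ)
    (hC : C < 0) (hγ0 : 0 < γ) (hγ1 : γ < 1)
    (hφ : 0 < φ) (hφα' : 0 ≤ φα') (hφβ' : 0 ≤ φβ')
    (hDα : φ - γ * φα' < 0) (hDβ : 0 < φ - γ * φβ')
    (θ : ℝ × ℝ) (lam : ℝ) (hlam0 : 0 < lam) (hlam1 : lam < 1)
    (hθ : θ = lam • ((C / (φ - γ * φα'),
        C / φ + C * γ * φβ' / (φ * (φ - γ * φα'))) : ℝ × ℝ)
      + (1 - lam) • ((C / φ + C * γ * φα' / (φ * (φ - γ * φβ')),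
        C / (φ - γ * φβ')) : ℝ × ℝ)) :
    let θπ₁ : ℝ × ℝ := (C / (φ - γ * φα'),
      C / φ + C * γ * φβ' / (φ * (φ - γ * φα')))
    let θπ₂ : ℝ × ℝ := (C / φ + C * γ * φα' / (φ * (φ - γ * φβ')),
      C / (φ - γ * φβ'))
    (θ.1 ≥ θ.2 → ∃ c : ℝ, 0 < c ∧
      ((-(φ * (φ * θ.1 - C - γ * φα' * θ.1)),
        -(φ * (φ * θ.2 - C - γ * φβ' * θ.1))) : ℝ × ℝ) = c • (θπ₂ - θπ₁)) ∧
    (θ.2 ≥ θ.1 → ∃ c : ℝ, 0 < c ∧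
      ((-(φ * (φ * θ.1 - C - γ * φα' * θ.2)),
        -(φ * (φ * θ.2 - C - γ * φβ' * θ.2))) : ℝ × ℝ) = c • (θπ₂ - θπ₁)) := by
  intro θπ₁ θπ₂
  have hφ0 : φ ≠ 0 := ne_of_gt hφ
  have hDα0 : φ - γ * φα' ≠ 0 := ne_of_lt hDα
  have hDβ0 : φ - γ * φβ' ≠ 0 := ne_of_gt hDβ
  subst hθ
  constructor
  · intro _
    refine ⟨-(1 - lam) * (φ * (φ - γ * φα')), ?_, ?_⟩
    · have h1 : 0 < 1 - lam := by linarith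
      nlinarith [mul_pos hφ h1]
    · simp only [θπ₁, θπ₂, Prod.smul_mk, Prod.mk_add_mk, Prod.smul_def,
        Prod.mk_sub_mk, Prod.mk.injEq, smul_eq_mul, Prod.sub_def, Prod.fst, Prod.snd]
      constructor <;> (field_simp; ring)
  · intro _
    refine ⟨lam * (φ * (φ - γ * φβ')), ?_, ?_⟩
    · positivity
    · simp only [θπ₁, θπ₂, Prod.smul_mk, Prod.mk_add_mk, Prod.smul_def,
        Prod.mk_sub_mk, Prod.mk.injEq, smul_eq_mul, Prod.sub_def, Prod.fst, Prod.snd]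
      constructor <;> (field_simp; ring)
end

section
/- With φα = φβ = φ > 0, γ ∈ (0,1), φα', φβ' ≥ 0, the matrix A₁ = [[−φ(φ−γφα'), 0], [γφφβ', −φ²]] governing the π₁-branch semi-gradient dynamics has eigenvalues −φ(φ−γφα') and −φ². Hence if Dα = φ − γφα' > 0, both eigenvalues are negative and the π₁ Bellman solution θ_{π₁} is a linearly stable equilibrium of the semi-gradient flow θ' = A₁θ + b; if Dα < 0, A₁ has a positive eigenvalue and θ_{π₁} is unstable. -/
lemma eig_of_vec (A : Matrix (Fin 2) (Fin 2) ℝ) (μ : ℝ) (v : Fin 2 → ℝ)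
    (hv : v ≠ 0) (h : A.mulVec v = μ • v) :
    Module.End.HasEigenvalue (Matrix.toLin' A) μ := by
  apply Module.End.hasEigenvalue_of_hasEigenvector (x := v)
  refine ⟨?_, hv⟩
  rw [Module.End.mem_eigenspace_iff, Matrix.toLin'_apply, h]

theorem pi1_branch_eigenvalues_and_stability
    (C γ φ φα' φβ' : ℝ)
    (hC : C < 0) (hφ : 0 < φ) (hγ0 : 0 < γ) (hγ1 : γ < 1)
    (hφα' : 0 ≤ φα') (hφβ' : 0 ≤ φβ') :
    let A₁ : Matrix (Fin 2) (Fin 2) ℝ :=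
      !![-(φ * (φ - γ * φα')), 0; γ * φ * φβ', -(φ ^ 2)]
    Module.End.HasEigenvalue (Matrix.toLin' A₁) (-(φ * (φ - γ * φα'))) ∧
    Module.End.HasEigenvalue (Matrix.toLin' A₁) (-(φ ^ 2)) ∧
    (0 < φ - γ * φα' →
      (-(φ * (φ - γ * φα')) < 0 ∧ -(φ ^ 2) < (0 : ℝ)) ∧
      Matrix.mulVec A₁ ![C / (φ - γ * φα'),
        C / φ + C * γ * φβ' / (φ * (φ - γ * φα'))] + ![φ * C, φ * C] = 0) ∧
    (φ - γ * φα' < 0 →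
      ∃ e : ℝ, 0 < e ∧ Module.End.HasEigenvalue (Matrix.toLin' A₁) e) := by
  intro A₁
  set a : ℝ := -(φ * (φ - γ * φα')) with ha
  have hφ2 : Module.End.HasEigenvalue (Matrix.toLin' A₁) (-(φ ^ 2)) := by
    apply eig_of_vec A₁ _ ![0, 1]
    · intro h
      have := congrFun h 1
      simp at this
    · funext i
      fin_cases i <;>
        simp [A₁, Matrix.mulVec, dotProduct, Fin.sum_univ_two]
  have ha1 : Module.End.HasEigenvalue (Matrix.toLin' A₁) a := by
    by_cases hcase : a + φ ^ 2 = 0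
    · have : a = -(φ ^ 2) := by linarith
      rw [this]; exact hφ2
    · apply eig_of_vec A₁ a ![a + φ ^ 2, γ * φ * φβ']
      · intro h
        exact hcase (congrFun h 0)
      · funext i
        fin_cases i <;>
          simp [A₁, Matrix.mulVec, dotProduct, Fin.sum_univ_two] <;> ring
  refine ⟨ha1, hφ2, ?_, ?_⟩
  · intro hD
    constructor
    · constructor
      · rw [ha]; nlinarith
      · nlinarith
    · have hD' : φ - γ * φα' ≠ 0 := ne_of_gt hD
      have hφ' : φ ≠ 0 := ne_of_gt hφ
      funext i
      fin_cases i <;>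
        · simp [A₁, Matrix.mulVec, dotProduct, Fin.sum_univ_two]
          field_simp
          ring
  · intro hD
    exact ⟨a, by rw [ha]; nlinarith, ha1⟩
end

section
/- With φα = φβ = φ > 0, γ ∈ (0,1), φα', φβ' ≥ 0, the matrix A₂ = [[−φ², γφφα'], [0, −φ(φ−γφβ')]] has eigenvalues −φ² and −φ(φ−γφβ'). Hence if Dβ = φ − γφβ' < 0, A₂ has a positive eigenvalue, so the π₂ Bellman solution θ_{π₂} (the zero of F^{π₂}_semi) is an unstable equilibrium of the flow θ' = A₂θ + b restricted to the region θ₁ ≤ θ₂. -/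
theorem pi2_branch_eigenvalues_and_instability
    (C γ φ φα' φβ' : ℝ)
    (hC : C < 0) (hφ : 0 < φ) (hγ0 : 0 < γ) (hγ1 : γ < 1)
    (hφα' : 0 ≤ φα') (hφβ' : 0 ≤ φβ') :
    let A₂ : Matrix (Fin 2) (Fin 2) ℝ :=
      !![-(φ ^ 2), γ * φ * φα'; 0, -(φ * (φ - γ * φβ'))]
    Module.End.HasEigenvalue (Matrix.toLin' A₂) (-(φ ^ 2)) ∧
    Module.End.HasEigenvalue (Matrix.toLin' A₂) (-(φ * (φ - γ * φβ'))) ∧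
    (φ - γ * φβ' < 0 →
      0 < -(φ * (φ - γ * φβ')) ∧
      Matrix.mulVec A₂ ![C / φ + C * γ * φα' / (φ * (φ - γ * φβ')),
        C / (φ - γ * φβ')] + ![φ * C, φ * C] = 0) := by
  intro A₂
  refine ⟨?_, ?_, ?_⟩
  · apply eig_of_vec A₂ _ ![1, 0]
    · intro h
      have := congrFun h 0
      simp at this
    · funext i
      fin_cases i <;>
        simp [A₂, Matrix.mulVec, dotProduct, Fin.sum_univ_two]
  · rcases eq_or_ne φβ' 0 with h0 | h0
    · have : -(φ * (φ - γ * φβ')) = -(φ ^ 2) := by rw [h0]; ring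
      rw [this]
      apply eig_of_vec A₂ _ ![1, 0]
      · intro h
        have := congrFun h 0
        simp at this
      · funext i
        fin_cases i <;>
          simp [A₂, Matrix.mulVec, dotProduct, Fin.sum_univ_two]
    · apply eig_of_vec A₂ _ ![φα' / φβ', 1]
      · intro h
        have := congrFun h 1
        simp at this
      · funext i
        fin_cases i <;>
          simp [A₂, Matrix.mulVec, dotProduct, Fin.sum_univ_two]
        field_simp
        ring
  · intro hD
    constructor
    · have : 0 < φ * (γ * φβ' - φ) := mul_pos hφ (by linarith)
      nlinarith
    · have hφne : φ ≠ 0 := ne_of_gt hφ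
      have hDne : φ - γ * φβ' ≠ 0 := ne_of_lt hD
      funext i
      fin_cases i <;>
        simp [A₂, Matrix.mulVec, dotProduct, Fin.sum_univ_two]
      · field_simp
        ring
      · field_simp
        ring
end
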